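/- Infinite-horizon L₂-gain of the closed loop (gain part of Lemma 1): let X ⊆ ℝⁿ, let V : ℝⁿ → ℝ be continuously differentiable, nonnegative on X, and satisfy the HJI equation at every point of X. Let f, g, k, h be continuous, let w : [0, ∞) → ℝ^q be continuous with ∫₀^∞ ‖w(t)‖² dt < ∞, and let x : [0, ∞) → ℝⁿ be differentiable with x(t) ∈ X and x'(t) = f(x(t)) + g(x(t))·u_V(x(t)) + k(x(t))·w(t) for all t ≥ 0, with V(x(0)) = 0. Then the nonnegative function t ↦ ‖h(x(t))‖² + ⟨u_V(x(t)), R·u_V(x(t))⟩ is integrable on [0, ∞) and ∫₀^∞ (‖h(x(t))‖² + ⟨u_V(x(t)), R·u_V(x(t))⟩) dt ≤ γ² · ∫₀^∞ ‖w(t)‖² dt; that is, the closed-loop system with the state feedback u = u_V has L₂-gain less than or equal to γ. -/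

import Mathlib

open Matrix

/-- Matrix–vector multiplication, valued in Euclidean space. -/
noncomputable def mv {a b : ℕ} (M : Matrix (Fin a) (Fin b) ℝ)
    (v : EuclideanSpace ℝ (Fin b)) : EuclideanSpace ℝ (Fin a) :=
  WithLp.toLp 2 (M.mulVec v)

/-- The control policy `u_V(x) = -(1/2) R⁻¹ g(x)ᵀ ∇V(x)`. -/
noncomputable def uPol {n m : ℕ}
    (g : EuclideanSpace ℝ (Fin n) → Matrix (Fin n) (Fin m) ℝ)
    (R : Matrix (Fin m) (Fin m) ℝ)
    (V : EuclideanSpace ℝ (Fin n) → ℝ)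
    (x : EuclideanSpace ℝ (Fin n)) : EuclideanSpace ℝ (Fin m) :=
  (-(1/2 : ℝ)) • mv R⁻¹ (mv (g x)ᵀ (gradient V x))

/-- The disturbance policy `w_V(x) = (1/(2γ²)) k(x)ᵀ ∇V(x)`. -/
noncomputable def wPol {n q : ℕ}
    (k : EuclideanSpace ℝ (Fin n) → Matrix (Fin n) (Fin q) ℝ)
    (γ : ℝ)
    (V : EuclideanSpace ℝ (Fin n) → ℝ)
    (x : EuclideanSpace ℝ (Fin n)) : EuclideanSpace ℝ (Fin q) :=
  (1/(2*γ^2)) • mv (k x)ᵀ (gradient V x)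

/-- The Hamiltonian `H_V(x,u,w)`. -/
noncomputable def Ham {n m q p : ℕ}
    (f : EuclideanSpace ℝ (Fin n) → EuclideanSpace ℝ (Fin n))
    (g : EuclideanSpace ℝ (Fin n) → Matrix (Fin n) (Fin m) ℝ)
    (k : EuclideanSpace ℝ (Fin n) → Matrix (Fin n) (Fin q) ℝ)
    (h : EuclideanSpace ℝ (Fin n) → EuclideanSpace ℝ (Fin p))
    (R : Matrix (Fin m) (Fin m) ℝ) (γ : ℝ)
    (V : EuclideanSpace ℝ (Fin n) → ℝ)
    (x : EuclideanSpace ℝ (Fin n))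
    (u : EuclideanSpace ℝ (Fin m)) (w : EuclideanSpace ℝ (Fin q)) : ℝ :=
  (inner ℝ (gradient V x) (f x + mv (g x) u + mv (k x) w) : ℝ)
    + ‖h x‖^2 + (inner ℝ u (mv R u) : ℝ) - γ^2 * ‖w‖^2

/-- `V` satisfies the HJI equation at `x`. -/
def HJIAt {n m q p : ℕ}
    (f : EuclideanSpace ℝ (Fin n) → EuclideanSpace ℝ (Fin n))
    (g : EuclideanSpace ℝ (Fin n) → Matrix (Fin n) (Fin m) ℝ)
    (k : EuclideanSpace ℝ (Fin n) → Matrix (Fin n) (Fin q) ℝ)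
    (h : EuclideanSpace ℝ (Fin n) → EuclideanSpace ℝ (Fin p))
    (R : Matrix (Fin m) (Fin m) ℝ) (γ : ℝ)
    (V : EuclideanSpace ℝ (Fin n) → ℝ)
    (x : EuclideanSpace ℝ (Fin n)) : Prop :=
  (inner ℝ (gradient V x) (f x) : ℝ) + ‖h x‖^2
    - (1/4) * (inner ℝ (mv (g x)ᵀ (gradient V x)) (mv R⁻¹ (mv (g x)ᵀ (gradient V x))) : ℝ)
    + (1/(4*γ^2)) * ‖mv (k x)ᵀ (gradient V x)‖^2 = 0

open MeasureTheory

private lemma inner_eq_dot {a : ℕ} (v u : EuclideanSpace ℝ (Fin a)) :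
    (inner ℝ v u : ℝ) = v ⬝ᵥ u := by
  simp [PiLp.inner_apply, dotProduct, mul_comm]

private lemma inner_mv_right {a b : ℕ} (M : Matrix (Fin a) (Fin b) ℝ)
    (v : EuclideanSpace ℝ (Fin a)) (u : EuclideanSpace ℝ (Fin b)) :
    (inner ℝ v (mv M u) : ℝ) = (inner ℝ (mv Mᵀ v) u : ℝ) := by
  rw [inner_eq_dot, inner_eq_dot]
  show v ⬝ᵥ M.mulVec u = Mᵀ.mulVec v ⬝ᵥ u
  rw [Matrix.dotProduct_mulVec, Matrix.mulVec_transpose]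


private lemma mv_posdef_nonneg {a : ℕ} {R : Matrix (Fin a) (Fin a) ℝ} (hR : R.PosDef)
    (u : EuclideanSpace ℝ (Fin a)) : 0 ≤ (inner ℝ u (mv R u) : ℝ) := by
  have := hR.posSemidef.re_dotProduct_nonneg u
  simpa [inner_eq_dot, mv] using this

private lemma grad_continuous {n : ℕ} {V : EuclideanSpace ℝ (Fin n) → ℝ}
    (hV : ContDiff ℝ 1 V) : Continuous (gradient V) := by
  have h1 : Continuous (fderiv ℝ V) := hV.continuous_fderiv one_ne_zero
  exact (InnerProductSpace.toDual ℝ (EuclideanSpace ℝ (Fin n))).symm.continuous.comp h1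

private lemma dissipation {n m q p : ℕ}
    (f : EuclideanSpace ℝ (Fin n) → EuclideanSpace ℝ (Fin n))
    (g : EuclideanSpace ℝ (Fin n) → Matrix (Fin n) (Fin m) ℝ)
    (k : EuclideanSpace ℝ (Fin n) → Matrix (Fin n) (Fin q) ℝ)
    (h : EuclideanSpace ℝ (Fin n) → EuclideanSpace ℝ (Fin p))
    {R : Matrix (Fin m) (Fin m) ℝ} (hR : R.PosDef)
    {γ : ℝ} (hγ : 0 < γ)
    (V : EuclideanSpace ℝ (Fin n) → ℝ)
    (y : EuclideanSpace ℝ (Fin n))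
    (hy : HJIAt f g k h R γ V y) (wv : EuclideanSpace ℝ (Fin q)) :
    (inner ℝ (gradient V y) (f y + mv (g y) (uPol g R V y) + mv (k y) wv) : ℝ)
      + (‖h y‖^2 + (inner ℝ (uPol g R V y) (mv R (uPol g R V y)) : ℝ))
      = γ^2 * ‖wv‖^2 - γ^2 * ‖wv - wPol k γ V y‖^2 := by
  unfold HJIAt at hy
  have hγ2 : γ^2 ≠ 0 := by positivity
  set G : EuclideanSpace ℝ (Fin n) := gradient V y with hG
  set a : EuclideanSpace ℝ (Fin m) := mv (g y)ᵀ G with ha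
  set b : EuclideanSpace ℝ (Fin q) := mv (k y)ᵀ G with hbdef
  have hRinv : R * R⁻¹ = 1 := Matrix.mul_nonsing_inv R hR.det_pos.ne'.isUnit
  have hu : uPol g R V y = (-(1/2:ℝ)) • mv R⁻¹ a := rfl
  have h1 : (inner ℝ G (mv (g y) (uPol g R V y)) : ℝ)
      = -(1/2) * (inner ℝ a (mv R⁻¹ a) : ℝ) := by
    rw [inner_mv_right, hu, real_inner_smul_right, ← ha]
  have hRu : mv R (uPol g R V y) = (-(1/2:ℝ)) • a := by
    rw [hu]
    show WithLp.toLp 2 (R *ᵥ ((-(1/2:ℝ)) • (R⁻¹ *ᵥ ((g y)ᵀ *ᵥ G.ofLp)))) = _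
    rw [Matrix.mulVec_smul, Matrix.mulVec_mulVec, hRinv, Matrix.one_mulVec]
    rfl
  have h2 : (inner ℝ (uPol g R V y) (mv R (uPol g R V y)) : ℝ)
      = (1/4) * (inner ℝ a (mv R⁻¹ a) : ℝ) := by
    rw [hRu, hu, real_inner_smul_left, real_inner_smul_right,
      real_inner_comm (mv R⁻¹ a) a]
    ring
  have h3 : (inner ℝ G (mv (k y) wv) : ℝ) = (inner ℝ b wv : ℝ) := inner_mv_right _ _ _
  have hb : wPol k γ V y = (1/(2*γ^2)) • b := rfl
  have h4 : ‖wv - wPol k γ V y‖^2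
      = ‖wv‖^2 - (1/γ^2) * (inner ℝ b wv : ℝ) + (1/(2*γ^2))^2 * ‖b‖^2 := by
    rw [hb, norm_sub_sq_real, real_inner_smul_right, norm_smul, mul_pow,
      Real.norm_eq_abs, sq_abs, real_inner_comm wv b]
    field_simp
  rw [inner_add_right, inner_add_right, h1, h2, h3, h4]
  set A := (inner ℝ G (f y) : ℝ)
  set B := (inner ℝ a (mv R⁻¹ a) : ℝ)
  set C := ‖b‖^2
  set D := (inner ℝ b wv : ℝ)
  set W := ‖wv‖^2
  field_simp at hy ⊢
  have hC' : ‖b‖^2 = C := rfl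
  linear_combination 4 * hy + 4 * hC'


/-- **Infinite-horizon L₂-gain of the closed loop (gain part of Lemma 1).**  Under the HJI
equation, along a closed-loop trajectory starting with `V(x 0) = 0` and an `L₂`
disturbance, the cost `t ↦ ‖h(x t)‖² + ⟨u_V(x t), R u_V(x t)⟩` is integrable on `[0,∞)` and
its integral is at most `γ² ∫₀^∞ ‖w t‖² dt`: the closed loop has `L₂`-gain `≤ γ`. -/
theorem infinite_horizon_l2_gain {n m q p : ℕ}
    (f : EuclideanSpace ℝ (Fin n) → EuclideanSpace ℝ (Fin n))
    (g : EuclideanSpace ℝ (Fin n) → Matrix (Fin n) (Fin m) ℝ)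
    (k : EuclideanSpace ℝ (Fin n) → Matrix (Fin n) (Fin q) ℝ)
    (h : EuclideanSpace ℝ (Fin n) → EuclideanSpace ℝ (Fin p))
    (R : Matrix (Fin m) (Fin m) ℝ) (hR : R.PosDef)
    (γ : ℝ) (hγ : 0 < γ)
    (X : Set (EuclideanSpace ℝ (Fin n)))
    (V : EuclideanSpace ℝ (Fin n) → ℝ)
    (hV : ContDiff ℝ 1 V)
    (hVnonneg : ∀ y ∈ X, 0 ≤ V y)
    (hHJI : ∀ y ∈ X, HJIAt f g k h R γ V y)
    (hf : Continuous f) (hg : Continuous g) (hk : Continuous k) (hh : Continuous h)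
    (w : ℝ → EuclideanSpace ℝ (Fin q)) (hw : ContinuousOn w (Set.Ici (0:ℝ)))
    (hwL2 : IntegrableOn (fun t => ‖w t‖^2) (Set.Ici (0:ℝ)))
    (x : ℝ → EuclideanSpace ℝ (Fin n))
    (hxX : ∀ t ∈ Set.Ici (0:ℝ), x t ∈ X)
    (hx : ∀ t ∈ Set.Ici (0:ℝ), HasDerivAt x
      (f (x t) + mv (g (x t)) (uPol g R V (x t)) + mv (k (x t)) (w t)) t)
    (hx0 : V (x 0) = 0) :
    IntegrableOn
        (fun t => ‖h (x t)‖^2 + (inner ℝ (uPol g R V (x t)) (mv R (uPol g R V (x t))) : ℝ))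
        (Set.Ici (0:ℝ))
      ∧ ∫ t in Set.Ici (0:ℝ),
            (‖h (x t)‖^2 + (inner ℝ (uPol g R V (x t)) (mv R (uPol g R V (x t))) : ℝ))
          ≤ γ^2 * ∫ t in Set.Ici (0:ℝ), ‖w t‖^2 := by
  have hVd : Differentiable ℝ V := hV.differentiable one_ne_zero
  set cost : ℝ → ℝ :=
    fun t => ‖h (x t)‖^2 + (inner ℝ (uPol g R V (x t)) (mv R (uPol g R V (x t))) : ℝ)
    with hcostdef
  set φ : ℝ → ℝ := fun t =>
    (inner ℝ (gradient V (x t))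
      (f (x t) + mv (g (x t)) (uPol g R V (x t)) + mv (k (x t)) (w t)) : ℝ) with hφdef
  have hcost_nonneg : ∀ t, 0 ≤ cost t := fun t =>
    add_nonneg (sq_nonneg _) (mv_posdef_nonneg hR _)
  -- continuity facts
  have hgrad : Continuous (gradient V) := grad_continuous hV
  have hxc : ContinuousOn x (Set.Ici 0) :=
    fun t ht => (hx t ht).continuousAt.continuousWithinAt
  have huPol : Continuous (fun z => uPol g R V z) := by
    unfold uPol mv
    exact ((show Continuous (fun z => (WithLp.toLp 2 (R⁻¹ *ᵥ (WithLp.toLp 2 ((g z)ᵀ *ᵥ (gradient V z).ofLp)).ofLp) : EuclideanSpace ℝ (Fin m))) from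
      (PiLp.continuous_toLp 2 _).comp (continuous_const.matrix_mulVec
      ((PiLp.continuous_ofLp 2 _).comp ((PiLp.continuous_toLp 2 _).comp (hg.matrix_transpose.matrix_mulVec ((PiLp.continuous_ofLp 2 _).comp hgrad)))))).const_smul (-(1/2:ℝ)))
  have hmvRu : Continuous (fun z => mv R (uPol g R V z)) := by
    unfold mv
    exact (PiLp.continuous_toLp 2 _).comp (continuous_const.matrix_mulVec ((PiLp.continuous_ofLp 2 _).comp huPol))
  have hcostF : Continuous (fun z => ‖h z‖^2
      + (inner ℝ (uPol g R V z) (mv R (uPol g R V z)) : ℝ)) :=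
    ((hh.norm.pow 2).add (huPol.inner hmvRu))
  have hcostc : ContinuousOn cost (Set.Ici 0) := hcostF.comp_continuousOn hxc
  have hφc : ContinuousOn φ (Set.Ici 0) := by
    have h1 : ContinuousOn (fun t => gradient V (x t)) (Set.Ici 0) :=
      hgrad.comp_continuousOn hxc
    have h2 : ContinuousOn (fun t => f (x t) + mv (g (x t)) (uPol g R V (x t))
        + mv (k (x t)) (w t)) (Set.Ici 0) := by
      have hA : Continuous (fun z => f z + mv (g z) (uPol g R V z)) := by
        unfold mv
        exact hf.add ((PiLp.continuous_toLp 2 _).comp (hg.matrix_mulVec ((PiLp.continuous_ofLp 2 _).comp huPol)))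
      have hB : ContinuousOn (fun t => mv (k (x t)) (w t)) (Set.Ici 0) := by
        have hc : Continuous (fun P : Matrix (Fin n) (Fin q) ℝ × (EuclideanSpace ℝ (Fin q))
            => mv P.1 P.2) := by
          unfold mv
          exact (PiLp.continuous_toLp 2 _).comp (continuous_fst.matrix_mulVec ((PiLp.continuous_ofLp 2 _).comp continuous_snd))
        exact hc.comp_continuousOn (((hk.comp_continuousOn hxc).prodMk hw))
      exact (hA.comp_continuousOn hxc).add hB
    exact h1.inner h2
  -- derivative of V ∘ x
  have hderiv : ∀ t ∈ Set.Ici (0:ℝ), HasDerivAt (fun s => V (x s)) (φ t) t := by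
    intro t ht
    have hd := ((hVd (x t)).hasGradientAt.hasFDerivAt).comp_hasDerivAt t (hx t ht)
    simpa [InnerProductSpace.toDual_apply_apply, hφdef, Function.comp_def] using hd
  -- pointwise bound
  have hbound : ∀ t ∈ Set.Ici (0:ℝ), φ t ≤ γ^2 * ‖w t‖^2 - cost t := by
    intro t ht
    have hd := dissipation f g k h hR hγ V (x t) (hHJI _ (hxX t ht)) (w t)
    have h0 : 0 ≤ γ^2 * ‖w t - wPol k γ V (x t)‖^2 := by positivity
    simp only [hcostdef, hφdef]
    linarith [hd]
  have hwnn : ContinuousOn (fun t => γ^2 * ‖w t‖^2) (Set.Ici (0:ℝ)) :=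
    continuousOn_const.mul ((hw.norm).pow 2)
  -- key finite-horizon estimate
  have key : ∀ T : ℝ, 0 ≤ T →
      ∫ t in (0:ℝ)..T, cost t ≤ γ^2 * ∫ t in Set.Ici (0:ℝ), ‖w t‖^2 := by
    intro T hT
    have hsub : Set.uIcc (0:ℝ) T ⊆ Set.Ici 0 := by
      rw [Set.uIcc_of_le hT]; exact Set.Icc_subset_Ici_self
    have hφint : IntervalIntegrable φ volume 0 T := (hφc.mono hsub).intervalIntegrable
    have hcint : IntervalIntegrable cost volume 0 T := (hcostc.mono hsub).intervalIntegrable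
    have hwint : IntervalIntegrable (fun t => γ^2 * ‖w t‖^2) volume 0 T :=
      (hwnn.mono hsub).intervalIntegrable
    have hFTC : ∫ t in (0:ℝ)..T, φ t = V (x T) - V (x 0) :=
      intervalIntegral.integral_eq_sub_of_hasDerivAt
        (fun t ht => hderiv t (hsub ht)) hφint
    have hmono : ∫ t in (0:ℝ)..T, cost t
        ≤ ∫ t in (0:ℝ)..T, (γ^2 * ‖w t‖^2 - φ t) := by
      apply intervalIntegral.integral_mono_on hT hcint (hwint.sub hφint)
      intro t ht
      have := hbound t (Set.Icc_subset_Ici_self ht)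
      linarith
    have hsplit : ∫ t in (0:ℝ)..T, (γ^2 * ‖w t‖^2 - φ t)
        = (∫ t in (0:ℝ)..T, γ^2 * ‖w t‖^2) - ∫ t in (0:ℝ)..T, φ t :=
      intervalIntegral.integral_sub hwint hφint
    have hVT : 0 ≤ V (x T) := hVnonneg _ (hxX T hT)
    have hwle : ∫ t in (0:ℝ)..T, γ^2 * ‖w t‖^2
        ≤ γ^2 * ∫ t in Set.Ici (0:ℝ), ‖w t‖^2 := by
      rw [intervalIntegral.integral_const_mul]
      have h1 : ∫ t in (0:ℝ)..T, ‖w t‖^2 = ∫ t in Set.Ioc 0 T, ‖w t‖^2 :=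
        intervalIntegral.integral_of_le hT
      have h2 : ∫ t in Set.Ioc (0:ℝ) T, ‖w t‖^2 ≤ ∫ t in Set.Ioi (0:ℝ), ‖w t‖^2 := by
        apply setIntegral_mono_set (hwL2.mono_set Set.Ioi_subset_Ici_self)
        · filter_upwards with t using sq_nonneg _
        · filter_upwards with t using fun ht => Set.Ioc_subset_Ioi_self ht
      rw [h1]
      have h3 : ∫ t in Set.Ici (0:ℝ), ‖w t‖^2 = ∫ t in Set.Ioi (0:ℝ), ‖w t‖^2 :=
        integral_Ici_eq_integral_Ioi
      rw [h3]
      exact mul_le_mul_of_nonneg_left h2 (sq_nonneg γ)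
    calc ∫ t in (0:ℝ)..T, cost t
        ≤ (∫ t in (0:ℝ)..T, γ^2 * ‖w t‖^2) - ∫ t in (0:ℝ)..T, φ t := by
          rw [← hsplit]; exact hmono
      _ ≤ ∫ t in (0:ℝ)..T, γ^2 * ‖w t‖^2 := by
          rw [hFTC, hx0]; linarith
      _ ≤ γ^2 * ∫ t in Set.Ici (0:ℝ), ‖w t‖^2 := hwle
  -- integrability on Ioi 0
  have hIntIoi : IntegrableOn cost (Set.Ioi (0:ℝ)) := by
    apply integrableOn_Ioi_of_intervalIntegral_norm_bounded
      (γ^2 * ∫ t in Set.Ici (0:ℝ), ‖w t‖^2) 0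
      (f := cost) (b := fun N : ℕ => (N:ℝ)) ?_ tendsto_natCast_atTop_atTop ?_
    · intro N
      have hsub : Set.uIcc (0:ℝ) (N:ℝ) ⊆ Set.Ici 0 := by
        rw [Set.uIcc_of_le (Nat.cast_nonneg N)]; exact Set.Icc_subset_Ici_self
      exact (intervalIntegrable_iff_integrableOn_Ioc_of_le (Nat.cast_nonneg N)).mp
        ((hcostc.mono hsub).intervalIntegrable)
    · filter_upwards with N
      have hnorm : (fun t => ‖cost t‖) = cost :=
        funext fun t => Real.norm_of_nonneg (hcost_nonneg t)
      rw [hnorm]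
      exact key _ (Nat.cast_nonneg N)
  have hIntIci : IntegrableOn cost (Set.Ici (0:ℝ)) :=
    (integrableOn_Ici_iff_integrableOn_Ioi).mpr hIntIoi
  refine ⟨hIntIci, ?_⟩
  have h3 : ∫ t in Set.Ici (0:ℝ), cost t = ∫ t in Set.Ioi (0:ℝ), cost t :=
    integral_Ici_eq_integral_Ioi
  rw [h3]
  have htend := intervalIntegral_tendsto_integral_Ioi 0 hIntIoi
    (tendsto_natCast_atTop_atTop (R := ℝ))
  exact le_of_tendsto htend
    (Filter.Eventually.of_forall fun N => key _ (Nat.cast_nonneg N))
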